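/- Frobenius reciprocity for the existential completion: for every morphism f : X → A in Λ, every ᾱ ∈ P^∃(A) and β̄ ∈ P^∃(X), one has ∃^e_f(P^∃_f(ᾱ) ∧ β̄) = ᾱ ∧ ∃^e_f(β̄) in P^∃(A). -/

import Mathlib

open CategoryTheory Limits

universe w v u

/-- A primary doctrine: a contravariant assignment of inf-semilattices with top
to objects of `C`, functorial and meet/top-preserving on morphisms. -/
structure PrimaryDoctrine (C : Type u) [Category.{v} C] where
  P : C → Type w
  [instInf : ∀ A, SemilatticeInf (P A)]
  [instTop : ∀ A, OrderTop (P A)]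
  map : ∀ {A B : C}, (A ⟶ B) → P B → P A
  map_id : ∀ (A : C) (α : P A), map (𝟙 A) α = α
  map_comp : ∀ {A B D : C} (f : A ⟶ B) (g : B ⟶ D) (α : P D),
    map (f ≫ g) α = map f (map g α)
  map_mono : ∀ {A B : C} (f : A ⟶ B), Monotone (map f)
  map_top : ∀ {A B : C} (f : A ⟶ B), map f ⊤ = ⊤
  map_inf : ∀ {A B : C} (f : A ⟶ B) (α β : P B), map f (α ⊓ β) = map f α ⊓ map f β

attribute [instance] PrimaryDoctrine.instInf PrimaryDoctrine.instTop

/-- A class `Λ` of morphisms containing identities, closed under composition,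
and closed under (chosen) pullbacks along arbitrary morphisms. -/
structure LambdaClass (C : Type u) [Category.{v} C] where
  mem : ∀ {X Y : C}, (X ⟶ Y) → Prop
  id_mem : ∀ X : C, mem (𝟙 X)
  comp_mem : ∀ {X Y Z : C} {f : X ⟶ Y} {g : Y ⟶ Z}, mem f → mem g → mem (f ≫ g)
  pbObj : ∀ {X Y Z : C} (g : X ⟶ Z), mem g → ∀ _f : Y ⟶ Z, C
  pbFst : ∀ {X Y Z : C} (g : X ⟶ Z) (hg : mem g) (f : Y ⟶ Z), pbObj g hg f ⟶ X
  pbSnd : ∀ {X Y Z : C} (g : X ⟶ Z) (hg : mem g) (f : Y ⟶ Z), pbObj g hg f ⟶ Y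
  isPB : ∀ {X Y Z : C} (g : X ⟶ Z) (hg : mem g) (f : Y ⟶ Z),
    IsPullback (pbFst g hg f) (pbSnd g hg f) g f
  pbSnd_mem : ∀ {X Y Z : C} (g : X ⟶ Z) (hg : mem g) (f : Y ⟶ Z), mem (pbSnd g hg f)

variable {C : Type u} [Category.{v} C]

/-- An element of the fibre `P^∃(A)` of the existential completion:
a pair of a morphism `g : B ⟶ A` in `Λ` and `α ∈ P(B)`. -/
structure ExEl (P : PrimaryDoctrine C) (L : LambdaClass C) (A : C) where
  B : C
  g : B ⟶ A
  hg : L.mem g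
  α : P.P B

variable {P : PrimaryDoctrine C} {L : LambdaClass C}

/-- The preorder on `P^∃(A)`. -/
def ExLe {A : C} (x y : ExEl P L A) : Prop :=
  ∃ w : x.B ⟶ y.B, w ≫ y.g = x.g ∧ x.α ≤ P.map w y.α

/-- Equivalence in the preorder `P^∃(A)`. -/
def ExEquiv {A : C} (x y : ExEl P L A) : Prop := ExLe x y ∧ ExLe y x

/-- The top element `(id_A, ⊤_A)` of `P^∃(A)`. -/
def topE (P : PrimaryDoctrine C) (L : LambdaClass C) (A : C) : ExEl P L A :=
  ⟨A, 𝟙 A, L.id_mem A, ⊤⟩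

/-- Reindexing `P^∃_f` along `f : A ⟶ B`, via the chosen pullback. -/
def reindex {A B : C} (f : A ⟶ B) (y : ExEl P L B) : ExEl P L A :=
  ⟨L.pbObj y.g y.hg f, L.pbSnd y.g y.hg f, L.pbSnd_mem y.g y.hg f,
   P.map (L.pbFst y.g y.hg f) y.α⟩

/-- Binary infimum in `P^∃(A)`, constructed via the chosen pullback. -/
def infE {A : C} (x y : ExEl P L A) : ExEl P L A :=
  ⟨L.pbObj x.g x.hg y.g, L.pbFst x.g x.hg y.g ≫ x.g,
   (by rw [(L.isPB x.g x.hg y.g).w]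
       exact L.comp_mem (L.pbSnd_mem x.g x.hg y.g) y.hg),
   P.map (L.pbFst x.g x.hg y.g) x.α ⊓ P.map (L.pbSnd x.g x.hg y.g) y.α⟩

/-- The left adjoint `∃^e_f` along `f ∈ Λ`, given by post-composition. -/
def existE {A B : C} (f : A ⟶ B) (hf : L.mem f) (x : ExEl P L A) : ExEl P L B :=
  ⟨x.B, x.g ≫ f, L.comp_mem x.hg hf, x.α⟩

/-- The unit `ι_A : P(A) → P^∃(A)`, `α ↦ (id_A, α)`. -/
def iota (P : PrimaryDoctrine C) (L : LambdaClass C) (A : C) (α : P.P A) : ExEl P L A :=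
  ⟨A, 𝟙 A, L.id_mem A, α⟩

/-- Frobenius reciprocity for the existential completion: for `f : X ⟶ A` in `Λ`,
`∃^e_f(P^∃_f(ᾱ) ⊓ β̄) = ᾱ ⊓ ∃^e_f(β̄)` in `P^∃(A)`. -/
theorem frobenius_existential_completion {X A : C} (f : X ⟶ A) (hf : L.mem f)
    (a : ExEl P L A) (b : ExEl P L X) :
    ExEquiv (existE f hf (infE (reindex f a) b)) (infE a (existE f hf b)) := by
  -- notation for the two pullback squares
  set q1 := L.pbFst a.g a.hg f with hq1
  set q2 := L.pbSnd a.g a.hg f with hq2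
  have hQ : IsPullback q1 q2 a.g f := L.isPB a.g a.hg f
  set r1 : L.pbObj (reindex f a).g (reindex f a).hg b.g ⟶ L.pbObj a.g a.hg f :=
    L.pbFst (reindex f a).g (reindex f a).hg b.g with hr1
  set r2 := L.pbSnd (reindex f a).g (reindex f a).hg b.g with hr2
  have hR : IsPullback r1 r2 q2 b.g :=
    L.isPB (reindex f a).g (reindex f a).hg b.g
  set s1 := L.pbFst a.g a.hg (existE f hf b).g with hs1
  set s2 : L.pbObj a.g a.hg (existE f hf b).g ⟶ b.B := L.pbSnd a.g a.hg (existE f hf b).g with hs2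
  have hS : IsPullback s1 s2 a.g (b.g ≫ f) :=
    L.isPB a.g a.hg (existE f hf b).g
  have hrq : r1 ≫ q2 = r2 ≫ b.g := hR.w
  have hqa : q1 ≫ a.g = q2 ≫ f := hQ.w
  have hsa : s1 ≫ a.g = s2 ≫ (b.g ≫ f) := hS.w
  constructor
  · -- forward: lift into S
    have hcomm : (r1 ≫ q1) ≫ a.g = r2 ≫ (b.g ≫ f) := by
      rw [Category.assoc, hqa, ← Category.assoc, hrq, Category.assoc]
    refine ⟨hS.lift (r1 ≫ q1) r2 hcomm, ?_, ?_⟩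
    · show hS.lift (r1 ≫ q1) r2 hcomm ≫ s1 ≫ a.g = (r1 ≫ q2) ≫ f
      rw [← Category.assoc, hS.lift_fst, hcomm, ← Category.assoc, ← hrq]
    · show P.map r1 (P.map q1 a.α) ⊓ P.map r2 b.α ≤
        P.map (hS.lift (r1 ≫ q1) r2 hcomm) (P.map s1 a.α ⊓ P.map s2 b.α)
      rw [P.map_inf, ← P.map_comp (hS.lift (r1 ≫ q1) r2 hcomm) s1,
        ← P.map_comp (hS.lift (r1 ≫ q1) r2 hcomm) s2, hS.lift_fst, hS.lift_snd, P.map_comp]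
  · -- backward: lift into R via Q
    have hcommQ : s1 ≫ a.g = (s2 ≫ b.g) ≫ f := by rw [hsa, Category.assoc]
    set u := hQ.lift s1 (s2 ≫ b.g) hcommQ with hu
    have hcommR : u ≫ q2 = s2 ≫ b.g := hQ.lift_snd _ _ _
    have hu1 : u ≫ q1 = s1 := hQ.lift_fst _ _ _
    refine ⟨hR.lift u s2 hcommR, ?_, ?_⟩
    · show hR.lift u s2 hcommR ≫ (r1 ≫ q2) ≫ f = s1 ≫ a.g
      rw [← Category.assoc, ← Category.assoc, hR.lift_fst, Category.assoc, ← Category.assoc u,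
        hcommR, Category.assoc, ← hsa]
    · show P.map s1 a.α ⊓ P.map s2 b.α ≤
        P.map (hR.lift u s2 hcommR) (P.map r1 (P.map q1 a.α) ⊓ P.map r2 b.α)
      rw [P.map_inf, ← P.map_comp (hR.lift u s2 hcommR) r1,
        ← P.map_comp (hR.lift u s2 hcommR) r2, hR.lift_fst, hR.lift_snd,
        ← P.map_comp u q1, hu1]
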